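/- Let G be a connected, nearly transitive finite simple graph with diameter d ≥ 20. Then G contains an induced cycle of length at least d − 17. -/

import Mathlib

/-- A graph is nearly transitive if for any two vertices `u, v` there is a graph
automorphism mapping `u` to `v` or to a neighbour of `v`. -/
def SimpleGraph.NearlyTransitive {W : Type*} (G : SimpleGraph W) : Prop :=
  ∀ u v : W, ∃ e : W ≃ W, (∀ x y, G.Adj (e x) (e y) ↔ G.Adj x y) ∧
    (e u = v ∨ G.Adj (e u) v)

/-- `G.HasInducedCycleOfLen ℓ` : the graph `G` contains an induced cycle of length `ℓ`,
i.e. `ℓ` distinct vertices `u_1, …, u_ℓ` such that `u_i` is adjacent to `u_j` iff `i` and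
`j` are consecutive modulo `ℓ`. -/
def SimpleGraph.HasInducedCycleOfLen {W : Type*} (G : SimpleGraph W) (ℓ : ℕ) : Prop :=
  ∃ f : ZMod ℓ → W, Function.Injective f ∧
    ∀ i j, G.Adj (f i) (f j) ↔ (j = i + 1 ∨ i = j + 1)

open SimpleGraph

namespace NTCycleAux
variable {W : Type*} {G : SimpleGraph W}

lemma chain_exists_walk (g : ℕ → W) {n : ℕ} (hadj : ∀ i, i < n → G.Adj (g i) (g (i+1))) :
    ∀ i j, i ≤ j → j ≤ n → ∃ p : G.Walk (g i) (g j), p.length = j - i := by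
  intro i j hij hjn
  induction j, hij using Nat.le_induction with
  | base => exact ⟨Walk.nil, by simp⟩
  | succ j hij ih =>
    obtain ⟨p, hp⟩ := ih (by omega)
    exact ⟨p.append (hadj j (by omega)).toWalk, by simp [hp]; omega⟩

lemma chain_dist_le (g : ℕ → W) {n : ℕ} (hadj : ∀ i, i < n → G.Adj (g i) (g (i+1)))
    {i j : ℕ} (hij : i ≤ j) (hjn : j ≤ n) : G.dist (g i) (g j) ≤ j - i := by
  obtain ⟨p, hp⟩ := chain_exists_walk g hadj i j hij hjn
  exact hp ▸ G.dist_le p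

lemma chain_reachable (g : ℕ → W) {n : ℕ} (hadj : ∀ i, i < n → G.Adj (g i) (g (i+1)))
    {i j : ℕ} (hij : i ≤ j) (hjn : j ≤ n) : G.Reachable (g i) (g j) := by
  obtain ⟨p, _⟩ := chain_exists_walk g hadj i j hij hjn
  exact ⟨p⟩

structure IsGeoFn (G : SimpleGraph W) (u v : W) (n : ℕ) (g : ℕ → W) : Prop where
  g0 : g 0 = u
  gn : g n = v
  adj : ∀ i, i < n → G.Adj (g i) (g (i+1))
  distl : ∀ i, i ≤ n → G.dist u (g i) = i

lemma exists_geoFn (u v : W) (h : G.Reachable u v) :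
    ∃ g : ℕ → W, IsGeoFn G u v (G.dist u v) g := by
  obtain ⟨p, hp⟩ := h.exists_walk_length_eq_dist
  have hadj : ∀ k, k < p.length → G.Adj (p.getVert k) (p.getVert (k+1)) :=
    fun k hk => p.adj_getVert_succ hk
  refine ⟨p.getVert, p.getVert_zero, ?_, fun i hi => hadj i (by omega), ?_⟩
  · rw [← hp]; exact p.getVert_length
  · intro i hi
    have h1 : G.dist (p.getVert 0) (p.getVert i) ≤ i := by
      simpa using chain_dist_le p.getVert hadj (Nat.zero_le i) (by omega)
    rw [p.getVert_zero] at h1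
    -- lower bound
    obtain ⟨w₁, hw₁⟩ := (p.getVert_zero ▸ chain_reachable p.getVert hadj (Nat.zero_le i)
      (by omega)).exists_walk_length_eq_dist
    obtain ⟨w₂, hw₂⟩ := chain_exists_walk p.getVert hadj i p.length (by omega) le_rfl
    have h2 : G.dist u v ≤ G.dist u (p.getVert i) + (p.length - i) := by
      have := G.dist_le ((w₁.append w₂).copy rfl p.getVert_length)
      simpa [hw₁, hw₂] using this
    omega

lemma IsGeoFn.dist_between {u v : W} {n : ℕ} {g : ℕ → W} (hg : IsGeoFn G u v n g)
    {i j : ℕ} (hij : i ≤ j) (hjn : j ≤ n) : G.dist (g i) (g j) = j - i := by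
  have h1 := chain_dist_le g hg.adj hij hjn
  -- lower: dist u (g j) ≤ dist u (g i) + dist (g i) (g j)
  obtain ⟨w₁, hw₁⟩ := (hg.g0 ▸ chain_reachable g hg.adj (Nat.zero_le i)
      (le_trans hij hjn)).exists_walk_length_eq_dist
  obtain ⟨w₂, hw₂⟩ := (chain_reachable g hg.adj hij hjn).exists_walk_length_eq_dist
  have h2 : G.dist u (g j) ≤ G.dist u (g i) + G.dist (g i) (g j) := by
    have := G.dist_le (w₁.append w₂)
    simpa [hw₁, hw₂] using this
  have e1 := hg.distl i (le_trans hij hjn)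
  have e2 := hg.distl j hjn
  omega

lemma adj_dist_le_one {u v : W} (h : G.Adj u v) : G.dist u v ≤ 1 := by
  simpa using G.dist_le h.toWalk

/-- distance is symmetric; triangle via concrete walks when reachable. -/
lemma dist_triangle_of_reachable {u v w : W} (h1 : G.Reachable u v) (h2 : G.Reachable v w) :
    G.dist u w ≤ G.dist u v + G.dist v w := by
  obtain ⟨p, hp⟩ := h1.exists_walk_length_eq_dist
  obtain ⟨q, hq⟩ := h2.exists_walk_length_eq_dist
  have := G.dist_le (p.append q)
  simpa [hp, hq] using this


lemma equiv_dist_le (e : W ≃ W) (he : ∀ x y, G.Adj (e x) (e y) ↔ G.Adj x y) (u v : W) :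
    G.dist (e u) (e v) ≤ G.dist u v := by
  let φ : G ≃g G := ⟨e, he _ _⟩
  by_cases h : G.Reachable u v
  · obtain ⟨p, hp⟩ := h.exists_walk_length_eq_dist
    have := G.dist_le (p.map φ.toHom)
    rw [Walk.length_map, hp] at this
    exact this
  · have h' : ¬ G.Reachable (e u) (e v) := by
      intro ⟨q⟩
      exact h ⟨(q.map φ.symm.toHom).copy (by simp [φ]) (by simp [φ])⟩
    rw [G.dist_eq_zero_of_not_reachable h', G.dist_eq_zero_of_not_reachable h]

lemma equiv_dist_eq (e : W ≃ W) (he : ∀ x y, G.Adj (e x) (e y) ↔ G.Adj x y) (u v : W) :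
    G.dist (e u) (e v) = G.dist u v := by
  refine le_antisymm (equiv_dist_le e he u v) ?_
  have he' : ∀ x y, G.Adj (e.symm x) (e.symm y) ↔ G.Adj x y := by
    intro x y
    conv_rhs => rw [← e.apply_symm_apply x, ← e.apply_symm_apply y]
    exact (he _ _).symm
  simpa using equiv_dist_le e.symm he' (e u) (e v)

lemma reachable_induce_of_chain (s : Set W) (g : ℕ → W) (n : ℕ)
    (hadj : ∀ i, i < n → G.Adj (g i) (g (i+1))) (hmem : ∀ i, i ≤ n → g i ∈ s) :
    (G.induce s).Reachable ⟨g 0, hmem 0 (Nat.zero_le n)⟩ ⟨g n, hmem n le_rfl⟩ := by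
  induction n with
  | zero => rfl
  | succ n ih =>
    have h1 : (G.induce s).Reachable ⟨g 0, _⟩ ⟨g n, hmem n (by omega)⟩ :=
      ih (fun i hi => hadj i (by omega)) (fun i hi => hmem i (by omega))
    refine h1.trans (Adj.reachable ?_)
    exact hadj n (by omega)


lemma hasInducedCycle_of_cyc (n : ℕ) (hn : 3 ≤ n) (cyc : ℕ → W)
    (hinj : ∀ u, u < n → ∀ v, v < n → cyc u = cyc v → u = v)
    (hadj1 : ∀ t, t + 1 < n → G.Adj (cyc t) (cyc (t + 1)))
    (hadj0 : G.Adj (cyc (n - 1)) (cyc 0))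
    (hnadj : ∀ u v, u < v → v < n → G.Adj (cyc u) (cyc v) → v = u + 1 ∨ (u = 0 ∧ v = n - 1)) :
    G.HasInducedCycleOfLen n := by
  haveI : NeZero n := ⟨by omega⟩
  have key : ∀ u v : ℕ, u < n → v < n → (G.Adj (cyc u) (cyc v) ↔
      (v = (u + 1) % n ∨ u = (v + 1) % n)) := by
    intro u v hu hv
    constructor
    · intro hadj
      rcases lt_trichotomy u v with h | h | h
      · rcases hnadj u v h hv hadj with h1 | ⟨h1, h2⟩
        · left; rw [Nat.mod_eq_of_lt (by omega)]; exact h1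
        · right; rw [h1, h2, Nat.sub_add_cancel (by omega), Nat.mod_self]
      · subst h; exact (hadj.ne rfl).elim
      · rcases hnadj v u h hu hadj.symm with h1 | ⟨h1, h2⟩
        · right; rw [Nat.mod_eq_of_lt (by omega)]; exact h1
        · left; rw [h1, h2, Nat.sub_add_cancel (by omega), Nat.mod_self]
    · intro h
      rcases h with h | h
      · rcases Nat.lt_or_ge (u + 1) n with h1 | h1
        · rw [Nat.mod_eq_of_lt h1] at h; subst h; exact hadj1 u h1
        · have h2 : u + 1 = n := by omega
          rw [h2, Nat.mod_self] at h
          have hu' : u = n - 1 := by omega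
          subst h hu'; exact hadj0
      · rcases Nat.lt_or_ge (v + 1) n with h1 | h1
        · rw [Nat.mod_eq_of_lt h1] at h; subst h; exact (hadj1 v h1).symm
        · have h2 : v + 1 = n := by omega
          rw [h2, Nat.mod_self] at h
          have hv' : v = n - 1 := by omega
          subst h hv'; exact hadj0.symm
  refine ⟨fun i => cyc i.val, ?_, ?_⟩
  · intro i j hij
    exact ZMod.val_injective n (hinj i.val (ZMod.val_lt i) j.val (ZMod.val_lt j) hij)
  · intro i j
    have h1 : (1 : ZMod n).val = 1 := by
      rw [ZMod.val_one_eq_one_mod, Nat.mod_eq_of_lt (by omega)]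
    have hiff1 : j = i + 1 ↔ j.val = (i.val + 1) % n := by
      rw [← (ZMod.val_injective n).eq_iff, ZMod.val_add, h1]
    have hiff2 : i = j + 1 ↔ i.val = (j.val + 1) % n := by
      rw [← (ZMod.val_injective n).eq_iff, ZMod.val_add, h1]
    rw [hiff1, hiff2]
    exact key i.val j.val (ZMod.val_lt i) (ZMod.val_lt j)

lemma reachable_induce_of_chain' (s : Set W) (g : ℕ → W) (n : ℕ)
    (hadj : ∀ i, i < n → G.Adj (g i) (g (i+1))) (hmem : ∀ i, i ≤ n → g i ∈ s)
    {u v : W} (hu : u ∈ s) (hv : v ∈ s) (h0 : g 0 = u) (hn : g n = v) :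
    (G.induce s).Reachable ⟨u, hu⟩ ⟨v, hv⟩ := by
  have h := reachable_induce_of_chain s g n hadj hmem
  have e1 : (⟨g 0, hmem 0 (Nat.zero_le n)⟩ : ↥s) = ⟨u, hu⟩ := Subtype.ext h0
  have e2 : (⟨g n, hmem n le_rfl⟩ : ↥s) = ⟨v, hv⟩ := Subtype.ext hn
  rw [e1, e2] at h; exact h

end NTCycleAux

open NTCycleAux in
/-- Any connected nearly transitive finite simple graph with diameter `d ≥ 20` contains
an induced cycle of length at least `d - 17`. -/
theorem nearlyTransitive_has_long_inducedCycle {W : Type*} [Fintype W]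
    (G : SimpleGraph W)
    (hconn : G.Connected)
    (htrans : G.NearlyTransitive)
    (d : ℕ) (hd : G.diam = d) (hd20 : 20 ≤ d) :
    ∃ ℓ : ℕ, d - 17 ≤ ℓ ∧ G.HasInducedCycleOfLen ℓ := by
  classical
  haveI : Nonempty W := hconn.nonempty
  obtain ⟨x, y, hxy⟩ := G.exists_dist_eq_diam
  rw [hd] at hxy
  have hdle : ∀ u v : W, G.dist u v ≤ d := fun u v => by
    rw [← hd]; exact G.dist_le_diam (G.ediam_ne_top_of_diam_ne_zero (by omega))
  obtain ⟨P, hP0⟩ := exists_geoFn x y (hconn x y)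
  rw [hxy] at hP0
  set c := d / 2 with hc
  set r := d / 4 with hrdef
  have hr5 : 5 ≤ r := by omega
  set m := P c with hm
  set a := P (c - r) with ha
  set b := P (c + r) with hb
  have hma : G.dist m a = r := by
    rw [G.dist_comm, ha, hm, hP0.dist_between (i := c - r) (j := c) (by omega) (by omega)]; omega
  have hmb : G.dist m b = r := by
    rw [hm, hb, hP0.dist_between (i := c) (j := c + r) (by omega) (by omega)]; omega
  have hab : G.dist a b = 2 * r := by
    rw [ha, hb, hP0.dist_between (i := c - r) (j := c + r) (by omega) (by omega)]; omega
  have hxm : G.dist x m = c := hP0.distl c (by omega)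
  -- far point z
  obtain ⟨e, he, hex⟩ := htrans x m
  set z := e y with hz
  have hzfar : d ≤ G.dist m z + 1 := by
    have h1 : G.dist (e x) z = d := by rw [hz, equiv_dist_eq e he, hxy]
    rcases hex with h | h
    · rw [← h]; omega
    · have h2 := hconn.dist_triangle (u := e x) (v := m) (w := z)
      have h3 := adj_dist_le_one h
      omega
  -- geodesic legs
  obtain ⟨Q, hQ0⟩ := exists_geoFn x z (hconn x z)
  obtain ⟨R, hR0⟩ := exists_geoFn y z (hconn y z)
  set ℓ₁ := G.dist x z with hl1
  set ℓ₂ := G.dist y z with hl2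
  have hl1d : ℓ₁ ≤ d := hdle x z
  have hl2d : ℓ₂ ≤ d := hdle y z
  -- the far-ball set
  set s : Set W := {v | r ≤ G.dist m v} with hsdef
  have hmemP1 : ∀ i, i ≤ c - r → P i ∈ s := by
    intro i hi
    have h1 := hP0.dist_between (i := i) (j := c) (by omega) (by omega)
    rw [← hm] at h1
    have h2 : G.dist m (P i) = c - i := by rw [G.dist_comm]; exact h1
    simp only [hsdef, Set.mem_setOf_eq]; omega
  have hmemP2 : ∀ i, c + r ≤ i → i ≤ d → P i ∈ s := by
    intro i h1 h2
    have := hP0.dist_between (i := c) (j := i) (by omega) h2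
    rw [← hm] at this
    simp only [hsdef, Set.mem_setOf_eq]; omega
  have hmemQ : ∀ i, i ≤ ℓ₁ → Q i ∈ s := by
    intro i hi
    simp only [hsdef, Set.mem_setOf_eq]
    rcases Nat.lt_or_ge i (c - r + 1) with h1 | h1
    · -- dist m (Q i) ≥ c - i ≥ r
      have t1 := hconn.dist_triangle (u := x) (v := Q i) (w := m)
      have t2 := hconn.dist_triangle (u := m) (v := Q i) (w := x)
      have e1 : G.dist x (Q i) = i := hQ0.distl i hi
      have e2 : G.dist (Q i) m = G.dist m (Q i) := G.dist_comm ..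
      have e3 : G.dist (Q i) x = i := by rw [G.dist_comm]; exact e1
      omega
    · -- dist m (Q i) ≥ dist m z - (ℓ₁ - i) ≥ i - 1 ≥ c - r ≥ r
      have t1 := hconn.dist_triangle (u := m) (v := Q i) (w := z)
      have e1 : G.dist (Q i) z = ℓ₁ - i := by
        have := hQ0.dist_between (i := i) (j := ℓ₁) hi le_rfl
        rw [hQ0.gn] at this; omega
      omega
  have hmemR : ∀ i, i ≤ ℓ₂ → R i ∈ s := by
    intro i hi
    simp only [hsdef, Set.mem_setOf_eq]
    have hmy : G.dist m y = d - c := by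
      have := hP0.dist_between (i := c) (j := d) (by omega) le_rfl
      rw [hP0.gn, ← hm] at this; omega
    rcases Nat.lt_or_ge i (d - c - r + 1) with h1 | h1
    · have t1 := hconn.dist_triangle (u := m) (v := y) (w := R i)
      have t2 := hconn.dist_triangle (u := m) (v := R i) (w := y)
      have e1 : G.dist y (R i) = i := hR0.distl i hi
      have e2 : G.dist (R i) y = i := by rw [G.dist_comm]; exact e1
      omega
    · have t1 := hconn.dist_triangle (u := m) (v := R i) (w := z)
      have e1 : G.dist (R i) z = ℓ₂ - i := by
        have := hR0.dist_between (i := i) (j := ℓ₂) hi le_rfl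
        rw [hR0.gn] at this; omega
      omega
  have hmem_a : a ∈ s := by simp only [hsdef, Set.mem_setOf_eq]; omega
  have hmem_b : b ∈ s := by simp only [hsdef, Set.mem_setOf_eq]; omega
  -- reachability inside the induced graph
  set G' : SimpleGraph ↥s := G.induce s with hG'
  have hmem_x : x ∈ s := by rw [← hP0.g0]; exact hmemP1 0 (by omega)
  have hmem_y : y ∈ s := by rw [← hP0.gn]; exact hmemP2 d (by omega) le_rfl
  have hmem_z : z ∈ s := by rw [← hQ0.gn]; exact hmemQ ℓ₁ le_rfl
  have hre1 : G'.Reachable ⟨a, hmem_a⟩ ⟨x, hmem_x⟩ :=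
    (reachable_induce_of_chain' s P (c - r) (fun i hi => hP0.adj i (by omega))
      (fun i hi => hmemP1 i hi) hmem_x hmem_a hP0.g0 rfl).symm
  have hre2 : G'.Reachable ⟨x, hmem_x⟩ ⟨z, hmem_z⟩ :=
    reachable_induce_of_chain' s Q ℓ₁ (fun i hi => hQ0.adj i hi)
      (fun i hi => hmemQ i hi) hmem_x hmem_z hQ0.g0 hQ0.gn
  have hre3 : G'.Reachable ⟨z, hmem_z⟩ ⟨y, hmem_y⟩ :=
    (reachable_induce_of_chain' s R ℓ₂ (fun i hi => hR0.adj i hi)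
      (fun i hi => hmemR i hi) hmem_y hmem_z hR0.g0 hR0.gn).symm
  have hcr1 : c + r ≤ d := by omega
  have hre4 : G'.Reachable ⟨y, hmem_y⟩ ⟨b, hmem_b⟩ :=
    (reachable_induce_of_chain' s (fun t => P (c + r + t)) (d - (c + r))
      (fun i hi => by
        have h2 : c + r + (i + 1) = (c + r + i) + 1 := by omega
        simp only [h2]
        exact hP0.adj (c + r + i) (by omega))
      (fun i hi => hmemP2 (c + r + i) (by omega) (by omega)) hmem_b hmem_y
      (by show P (c + r + 0) = b; rw [Nat.add_zero])
      (by show P (c + r + (d - (c + r))) = y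
          rw [show c + r + (d - (c + r)) = d from by omega]; exact hP0.gn)).symm
  have hreach : G'.Reachable ⟨a, hmem_a⟩ ⟨b, hmem_b⟩ :=
    ((hre1.trans hre2).trans hre3).trans hre4
  -- shortest path from a to b within the far set
  obtain ⟨S', hS'⟩ := exists_geoFn (G := G') ⟨a, hmem_a⟩ ⟨b, hmem_b⟩ hreach
  set L := G'.dist ⟨a, hmem_a⟩ ⟨b, hmem_b⟩ with hL
  set S : ℕ → W := fun t => (S' t).val with hSdef
  have hS0 : S 0 = a := congrArg Subtype.val hS'.g0
  have hSL : S L = b := congrArg Subtype.val hS'.gn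
  have hSadj : ∀ t, t < L → G.Adj (S t) (S (t + 1)) := fun t ht => hS'.adj t ht
  have hSmem : ∀ t, r ≤ G.dist m (S t) := fun t => (S' t).2
  have hSdist : ∀ t₁ t₂, t₁ ≤ t₂ → t₂ ≤ L → G'.dist (S' t₁) (S' t₂) = t₂ - t₁ :=
    fun t₁ t₂ h1 h2 => hS'.dist_between h1 h2
  have hSinj : ∀ t₁ t₂, t₁ ≤ t₂ → t₂ ≤ L → S t₁ = S t₂ → t₁ = t₂ := by
    intro t₁ t₂ h1 h2 hEq
    have : S' t₁ = S' t₂ := Subtype.ext hEq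
    have h3 := hSdist t₁ t₂ h1 h2
    rw [this] at h3
    rw [SimpleGraph.dist_self] at h3
    omega
  have hSnadj : ∀ t₁ t₂, t₁ + 2 ≤ t₂ → t₂ ≤ L → ¬ G.Adj (S t₁) (S t₂) := by
    intro t₁ t₂ h1 h2 hAdj
    have hadj' : G'.Adj (S' t₁) (S' t₂) := hAdj
    have h3 := adj_dist_le_one (G := G') hadj'
    have h4 := hSdist t₁ t₂ (by omega) h2
    omega
  -- geodesics from m to a and from m to b
  obtain ⟨A, hA0⟩ := exists_geoFn m a (hconn m a)
  rw [hma] at hA0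
  obtain ⟨B, hB0⟩ := exists_geoFn m b (hconn m b)
  rw [hmb] at hB0
  have hAm : ∀ i, i ≤ r → G.dist m (A i) = i := hA0.distl
  have hBm : ∀ i, i ≤ r → G.dist m (B i) = i := hB0.distl
  have hAa : ∀ i, i ≤ r → G.dist (A i) a = r - i := by
    intro i hi
    have := hA0.dist_between (i := i) (j := r) hi le_rfl
    rw [hA0.gn] at this; omega
  have hBb : ∀ i, i ≤ r → G.dist (B i) b = r - i := by
    intro i hi
    have := hB0.dist_between (i := i) (j := r) hi le_rfl
    rw [hB0.gn] at this; omega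
  -- interface facts
  have hABadj : ∀ i, i ≤ r → ∀ j, j ≤ r → G.Adj (A i) (B j) → i + j ≤ 1 := by
    intro i hi j hj hAdj
    have t1 := hconn.dist_triangle (u := a) (v := A i) (w := b)
    have t2 := hconn.dist_triangle (u := A i) (v := B j) (w := b)
    have e1 : G.dist a (A i) = r - i := by rw [G.dist_comm]; exact hAa i hi
    have e2 := adj_dist_le_one hAdj
    have e3 := hBb j hj
    omega
  have hABne : ∀ i, i ≤ r → ∀ j, j ≤ r → 1 ≤ i → A i ≠ B j := by
    intro i hi j hj h1 hEq
    have e1 := hAm i hi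
    have e2 := hBm j hj
    rw [hEq] at e1
    have hij : i = j := by omega
    have t1 := hconn.dist_triangle (u := a) (v := A i) (w := b)
    have e3 : G.dist a (A i) = r - i := by rw [G.dist_comm]; exact hAa i hi
    have e4 := hBb j hj
    rw [hEq] at t1 e3
    omega
  have hSAadj : ∀ t, ∀ i, i ≤ r → G.Adj (S t) (A i) → r ≤ i + 1 := by
    intro t i hi hAdj
    have t1 := hconn.dist_triangle (u := m) (v := A i) (w := S t)
    have e1 := adj_dist_le_one hAdj.symm
    have e2 := hAm i hi
    have e3 := hSmem t
    omega
  have hSBadj : ∀ t, ∀ i, i ≤ r → G.Adj (S t) (B i) → r ≤ i + 1 := by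
    intro t i hi hAdj
    have t1 := hconn.dist_triangle (u := m) (v := B i) (w := S t)
    have e1 := adj_dist_le_one hAdj.symm
    have e2 := hBm i hi
    have e3 := hSmem t
    omega
  have hSAne : ∀ t, ∀ i, i + 1 ≤ r → S t ≠ A i := by
    intro t i hi hEq
    have e1 := hAm i (by omega)
    have e2 := hSmem t
    rw [hEq] at e2
    omega
  have hSBne : ∀ t, ∀ i, i + 1 ≤ r → S t ≠ B i := by
    intro t i hi hEq
    have e1 := hBm i (by omega)
    have e2 := hSmem t
    rw [hEq] at e2
    omega
  have hAinj : ∀ i, i ≤ r → ∀ j, j ≤ r → A i = A j → i = j := by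
    intro i hi j hj hEq
    have e1 := hAm i hi
    have e2 := hAm j hj
    rw [hEq] at e1
    omega
  have hBinj : ∀ i, i ≤ r → ∀ j, j ≤ r → B i = B j → i = j := by
    intro i hi j hj hEq
    have e1 := hBm i hi
    have e2 := hBm j hj
    rw [hEq] at e1
    omega
  have hAadj2 : ∀ i, i ≤ r → ∀ j, j ≤ r → i < j → G.Adj (A i) (A j) → j = i + 1 := by
    intro i hi j hj hij hAdj
    have e1 := hA0.dist_between (i := i) (j := j) (by omega) hj
    have e2 := adj_dist_le_one hAdj
    omega
  have hBadj2 : ∀ i, i ≤ r → ∀ j, j ≤ r → i < j → G.Adj (B i) (B j) → j = i + 1 := by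
    intro i hi j hj hij hAdj
    have e1 := hB0.dist_between (i := i) (j := j) (by omega) hj
    have e2 := adj_dist_le_one hAdj
    omega
  -- junction indices
  have hqwL : G.Adj (S L) (B (r - 1)) := by
    rw [hSL, ← hB0.gn, show r = r - 1 + 1 from by omega]
    exact (hB0.adj (r - 1) (by omega)).symm
  have hqex : ∃ t, G.Adj (S t) (B (r - 1)) := ⟨L, hqwL⟩
  set q' := Nat.find hqex with hq'def
  have hq'adj : G.Adj (S q') (B (r - 1)) := Nat.find_spec hqex
  have hq'le : q' ≤ L := Nat.find_min' hqex hqwL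
  have hq'min : ∀ t, t < q' → ¬ G.Adj (S t) (B (r - 1)) := fun t ht => Nat.find_min hqex ht
  have hpwa : G.Adj (S 0) (A (r - 1)) := by
    rw [hS0, ← hA0.gn, show r = r - 1 + 1 from by omega]
    exact (hA0.adj (r - 1) (by omega)).symm
  set p' := Nat.findGreatest (fun t => G.Adj (S t) (A (r - 1))) q' with hp'def
  have hp'adj : G.Adj (S p') (A (r - 1)) := by
    have h := Nat.findGreatest_spec (P := fun t => G.Adj (S t) (A (r - 1)))
      (Nat.zero_le q') hpwa
    exact h
  have hp'le : p' ≤ q' := Nat.findGreatest_le q'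
  have hp'max : ∀ t, p' < t → t ≤ q' → ¬ G.Adj (S t) (A (r - 1)) := fun t h1 h2 =>
    Nat.findGreatest_is_greatest (P := fun t => G.Adj (S t) (A (r - 1))) h1 h2
  -- p' < q'
  have hp'q' : p' < q' := by
    rcases Nat.lt_or_ge p' q' with h | h
    · exact h
    · exfalso
      have hEq : p' = q' := by omega
      rw [hEq] at hp'adj
      have t1 := hconn.dist_triangle (u := A (r - 1)) (v := S q') (w := B (r - 1))
      have t2 := hconn.dist_triangle (u := a) (v := A (r - 1)) (w := B (r - 1))
      have t3 := hconn.dist_triangle (u := a) (v := B (r - 1)) (w := b)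
      have e1 := adj_dist_le_one hp'adj.symm
      have e2 := adj_dist_le_one hq'adj
      have e3 : G.dist a (A (r - 1)) = 1 := by
        rw [G.dist_comm]; rw [hAa (r - 1) (by omega)]; omega
      have e4 : G.dist (B (r - 1)) b = 1 := by rw [hBb (r - 1) (by omega)]; omega
      omega
  -- gap lower bound
  have hgap : 2 * r ≤ (q' - p') + 4 := by
    have t1 := hconn.dist_triangle (u := a) (v := S p') (w := b)
    have t2 := hconn.dist_triangle (u := S p') (v := S q') (w := b)
    have t3 := hconn.dist_triangle (u := a) (v := A (r - 1)) (w := S p')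
    have t4 := hconn.dist_triangle (u := S q') (v := B (r - 1)) (w := b)
    have e1 : G.dist a (A (r - 1)) = 1 := by
      rw [G.dist_comm]; rw [hAa (r - 1) (by omega)]; omega
    have e2 := adj_dist_le_one hp'adj.symm
    have e3 : G.dist (A (r - 1)) (S p') ≤ 1 := G.dist_comm ▸ e2
    have e4 := adj_dist_le_one hq'adj
    have e5 : G.dist (B (r - 1)) b = 1 := by rw [hBb (r - 1) (by omega)]; omega
    have e6 : G.dist (S p') (S q') ≤ q' - p' :=
      chain_dist_le S (n := L) hSadj (by omega) hq'le
    omega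
  -- the cycle
  set n := 2 * r + (q' - p') with hndef
  set cyc : ℕ → W := fun t =>
    if t + 1 ≤ r then A (r - 1 - t)
    else if t ≤ 2 * r - 2 then B (t - (r - 1))
    else S (q' - (t - (2 * r - 1))) with hcycdef
  have hc1 : ∀ t, t + 1 ≤ r → cyc t = A (r - 1 - t) := by
    intro t ht; simp only [hcycdef]; rw [if_pos ht]
  have hc2 : ∀ t, r ≤ t → t ≤ 2 * r - 2 → cyc t = B (t - (r - 1)) := by
    intro t h1 h2; simp only [hcycdef]; rw [if_neg (by omega), if_pos h2]
  have hc3 : ∀ t, 2 * r - 1 ≤ t → cyc t = S (q' - (t - (2 * r - 1))) := by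
    intro t h1; simp only [hcycdef]; rw [if_neg (by omega), if_neg (by omega)]
  -- injectivity
  have key_ne : ∀ u v, u < v → v < n → cyc u ≠ cyc v := by
    intro u v huv hv hEq
    rcases Nat.lt_or_ge u r with hu1 | hu1
    · rw [hc1 u (by omega)] at hEq
      rcases Nat.lt_or_ge v r with hv1 | hv1
      · rw [hc1 v (by omega)] at hEq
        have := hAinj (r - 1 - u) (by omega) (r - 1 - v) (by omega) hEq
        omega
      rcases Nat.lt_or_ge v (2 * r - 1) with hv2 | hv2
      · rw [hc2 v (by omega) (by omega)] at hEq
        have e1 := hAm (r - 1 - u) (by omega)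
        have e2 := hBm (v - (r - 1)) (by omega)
        rw [hEq] at e1
        have hij : r - 1 - u = v - (r - 1) := by omega
        exact hABne (r - 1 - u) (by omega) (v - (r - 1)) (by omega) (by omega) hEq
      · rw [hc3 v (by omega)] at hEq
        exact hSAne (q' - (v - (2 * r - 1))) (r - 1 - u) (by omega) hEq.symm
    rcases Nat.lt_or_ge u (2 * r - 1) with hu2 | hu2
    · rw [hc2 u (by omega) (by omega)] at hEq
      rcases Nat.lt_or_ge v (2 * r - 1) with hv2 | hv2
      · rw [hc2 v (by omega) (by omega)] at hEq
        have := hBinj (u - (r - 1)) (by omega) (v - (r - 1)) (by omega) hEq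
        omega
      · rw [hc3 v (by omega)] at hEq
        exact hSBne (q' - (v - (2 * r - 1))) (u - (r - 1)) (by omega) hEq.symm
    · rw [hc3 u hu2, hc3 v (by omega)] at hEq
      have := hSinj (q' - (v - (2 * r - 1))) (q' - (u - (2 * r - 1)))
        (by omega) (by omega) hEq.symm
      omega
  -- consecutive adjacency
  have key_adj : ∀ t, t + 1 < n → G.Adj (cyc t) (cyc (t + 1)) := by
    intro t ht
    rcases Nat.lt_or_ge (t + 1) r with h1 | h1
    · rw [hc1 t (by omega), hc1 (t + 1) (by omega)]
      have := hA0.adj (r - 2 - t) (by omega)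
      rw [show r - 2 - t + 1 = r - 1 - t from by omega] at this
      rw [show r - 1 - (t + 1) = r - 2 - t from by omega]
      exact this.symm
    rcases Nat.lt_or_ge t r with h2 | h2
    · -- t = r - 1, t + 1 = r
      have htr : t = r - 1 := by omega
      rw [hc1 t (by omega), hc2 (t + 1) (by omega) (by omega)]
      rw [show r - 1 - t = 0 from by omega, show t + 1 - (r - 1) = 1 from by omega]
      rw [hA0.g0, ← hB0.g0]
      exact hB0.adj 0 (by omega)
    rcases Nat.lt_or_ge (t + 1) (2 * r - 1) with h3 | h3
    · rw [hc2 t (by omega) (by omega), hc2 (t + 1) (by omega) (by omega)]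
      have := hB0.adj (t - (r - 1)) (by omega)
      rw [show t - (r - 1) + 1 = t + 1 - (r - 1) from by omega] at this
      exact this
    rcases Nat.lt_or_ge t (2 * r - 1) with h4 | h4
    · -- t = 2r - 2
      rw [hc2 t (by omega) (by omega), hc3 (t + 1) (by omega)]
      rw [show t - (r - 1) = r - 1 from by omega,
        show q' - (t + 1 - (2 * r - 1)) = q' from by omega]
      exact hq'adj.symm
    · rw [hc3 t h4, hc3 (t + 1) (by omega)]
      have hk : p' + 1 ≤ q' - (t - (2 * r - 1)) := by omega
      have := hSadj (q' - (t - (2 * r - 1)) - 1) (by omega)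
      rw [show q' - (t - (2 * r - 1)) - 1 + 1 = q' - (t - (2 * r - 1)) from by omega] at this
      rw [show q' - (t + 1 - (2 * r - 1)) = q' - (t - (2 * r - 1)) - 1 from by omega]
      exact this.symm
  -- closing edge
  have key_cl : G.Adj (cyc (n - 1)) (cyc 0) := by
    rw [hc3 (n - 1) (by omega), hc1 0 (by omega)]
    rw [show q' - (n - 1 - (2 * r - 1)) = p' from by omega,
      show r - 1 - 0 = r - 1 from by omega]
    exact hp'adj
  -- no chords
  have key_nadj : ∀ u v, u < v → v < n → G.Adj (cyc u) (cyc v) →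
      v = u + 1 ∨ (u = 0 ∧ v = n - 1) := by
    intro u v huv hv hAdj
    rcases Nat.lt_or_ge u r with hu1 | hu1
    · rw [hc1 u (by omega)] at hAdj
      rcases Nat.lt_or_ge v r with hv1 | hv1
      · rw [hc1 v (by omega)] at hAdj
        have := hAadj2 (r - 1 - v) (by omega) (r - 1 - u) (by omega) (by omega) hAdj.symm
        left; omega
      rcases Nat.lt_or_ge v (2 * r - 1) with hv2 | hv2
      · rw [hc2 v (by omega) (by omega)] at hAdj
        have h1 := hABadj (r - 1 - u) (by omega) (v - (r - 1)) (by omega) hAdj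
        left; omega
      · rw [hc3 v (by omega)] at hAdj
        have h1 := hSAadj (q' - (v - (2 * r - 1))) (r - 1 - u) (by omega) hAdj.symm
        have hu0 : u = 0 := by omega
        have hidx : r - 1 - u = r - 1 := by omega
        rw [hidx] at hAdj
        have h2 : q' - (v - (2 * r - 1)) = p' := by
          by_contra hne
          exact hp'max (q' - (v - (2 * r - 1))) (by omega) (by omega) hAdj.symm
        right; exact ⟨hu0, by omega⟩
    rcases Nat.lt_or_ge u (2 * r - 1) with hu2 | hu2
    · rw [hc2 u (by omega) (by omega)] at hAdj
      rcases Nat.lt_or_ge v (2 * r - 1) with hv2 | hv2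
      · rw [hc2 v (by omega) (by omega)] at hAdj
        have := hBadj2 (u - (r - 1)) (by omega) (v - (r - 1)) (by omega) (by omega) hAdj
        left; omega
      · rw [hc3 v (by omega)] at hAdj
        have h1 := hSBadj (q' - (v - (2 * r - 1))) (u - (r - 1)) (by omega) hAdj.symm
        have hur : u = 2 * r - 2 := by omega
        have hidx : u - (r - 1) = r - 1 := by omega
        rw [hidx] at hAdj
        have h2 : q' - (v - (2 * r - 1)) = q' := by
          by_contra hne
          exact hq'min (q' - (v - (2 * r - 1))) (by omega) hAdj.symm
        left; omega
    · rw [hc3 u hu2, hc3 v (by omega)] at hAdj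
      have h1 : ¬ (q' - (v - (2 * r - 1)) + 2 ≤ q' - (u - (2 * r - 1))) := by
        intro h
        exact hSnadj _ _ h (by omega) hAdj.symm
      left; omega
  refine ⟨n, by omega, ?_⟩
  refine hasInducedCycle_of_cyc n (by omega) cyc ?_ key_adj key_cl key_nadj
  intro u hu v hv hEq
  rcases lt_trichotomy u v with h | h | h
  · exact absurd hEq (key_ne u v h hv)
  · exact h
  · exact absurd hEq.symm (key_ne v u h hu)
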